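/- Let R = (<₁, <₂, <₃) be a standard representation of a finite set V with |V| ≥ 4. Then every vertex of the graph Σ₂(R) has degree at least 3. -/

import Mathlib

open SimpleGraph

variable {V : Type*}

/-- The graph Σ₂(R) for a triple of linear orders R = (l₁, l₂, l₃) on V:
`x` and `y` are adjacent iff every other vertex `z` lies above both `x` and `y`
in one of the three orders. -/
def Sigma2 (l₁ l₂ l₃ : LinearOrder V) : SimpleGraph V where
  Adj x y := x ≠ y ∧ ∀ z, z ≠ x → z ≠ y →
    (l₁.lt x z ∧ l₁.lt y z) ∨ (l₂.lt x z ∧ l₂.lt y z) ∨ (l₃.lt x z ∧ l₃.lt y z)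
  symm := ⟨by
    rintro x y ⟨hxy, h⟩
    exact ⟨hxy.symm, fun z hzy hzx => by rcases h z hzx hzy with h|h|h <;> tauto⟩⟩
  loopless := ⟨fun x h => h.1 rfl⟩

/-- The three orders have empty intersection: for distinct x, y, some order has x below y. -/
def IsRep (l₁ l₂ l₃ : LinearOrder V) : Prop :=
  ∀ x y : V, x ≠ y → l₁.lt x y ∨ l₂.lt x y ∨ l₃.lt x y

/-- `a` is the maximum element of the linear order `l`. -/
def IsMaxOf (l : LinearOrder V) (a : V) : Prop := ∀ x, x ≠ a → l.lt x a

/-- `a` is among the two smallest elements of `l`: at most one element lies below `a`. -/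
def AmongTwoSmallest (l : LinearOrder V) (a : V) : Prop :=
  ∀ x y, l.lt x a → l.lt y a → x = y

/-- `R = (l₁, l₂, l₃)` is a standard representation with `<ᵢ`-maxima `a₁, a₂, a₃`. -/
structure IsStdRep (l₁ l₂ l₃ : LinearOrder V) (a₁ a₂ a₃ : V) : Prop where
  rep : IsRep l₁ l₂ l₃
  top₁ : IsMaxOf l₁ a₁
  top₂ : IsMaxOf l₂ a₂
  top₃ : IsMaxOf l₃ a₃
  a₁_small₂ : AmongTwoSmallest l₂ a₁
  a₁_small₃ : AmongTwoSmallest l₃ a₁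
  a₂_small₁ : AmongTwoSmallest l₁ a₂
  a₂_small₃ : AmongTwoSmallest l₃ a₂
  a₃_small₁ : AmongTwoSmallest l₁ a₃
  a₃_small₂ : AmongTwoSmallest l₂ a₃

/-- The restriction of a linear order on `V` to `V \ {b}`. -/
def restrictOrder (l : LinearOrder V) (b : V) : LinearOrder {x : V // x ≠ b} :=
  @LinearOrder.lift' _ _ l Subtype.val Subtype.val_injective

section Aux

lemma lo_total (l : LinearOrder V) {x y : V} (h : x ≠ y) : l.lt x y ∨ l.lt y x := by
  letI := l; exact h.lt_or_gt

lemma lo_trans (l : LinearOrder V) {x y z : V} (h : l.lt x y) (h' : l.lt y z) : l.lt x z := by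
  letI := l; exact lt_trans h h'

lemma lo_irrefl (l : LinearOrder V) {x : V} (h : l.lt x x) : False := by
  letI := l; exact lt_irrefl x h

lemma lo_asymm (l : LinearOrder V) {x y : V} (h : l.lt x y) (h' : l.lt y x) : False := by
  letI := l; exact lt_asymm h h'

lemma lo_ne (l : LinearOrder V) {x y : V} (h : l.lt x y) : x ≠ y := by
  letI := l; exact ne_of_lt h

lemma eq_of_lt_small (l : LinearOrder V) {b c x : V} (hb : AmongTwoSmallest l b)
    (hc : AmongTwoSmallest l c) (hbc : b ≠ c) (hx : l.lt x b) : x = c := by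
  rcases lo_total l hbc with h | h
  · have hxb := hc x b (lo_trans l hx h) h
    subst hxb
    exact absurd hx (fun hh => lo_irrefl l hh)
  · exact hb x c hx h

lemma IsStdRep.cycle {l₁ l₂ l₃ : LinearOrder V} {a₁ a₂ a₃ : V}
    (h : IsStdRep l₁ l₂ l₃ a₁ a₂ a₃) : IsStdRep l₂ l₃ l₁ a₂ a₃ a₁ :=
  ⟨fun x y hxy => by rcases h.rep x y hxy with h'|h'|h' <;> tauto,
   h.top₂, h.top₃, h.top₁, h.a₂_small₃, h.a₂_small₁, h.a₃_small₂,
   h.a₃_small₁, h.a₁_small₂, h.a₁_small₃⟩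

lemma Sigma2_cycle (l₁ l₂ l₃ : LinearOrder V) : Sigma2 l₂ l₃ l₁ = Sigma2 l₁ l₂ l₃ := by
  ext x y
  constructor <;> rintro ⟨hxy, h⟩ <;>
    exact ⟨hxy, fun z hz hz' => by rcases h z hz hz' with h'|h'|h' <;> tauto⟩

lemma maxima_ne [Fintype V] (hV : 3 ≤ Fintype.card V) {l : LinearOrder V}
    {a b : V} (htop : IsMaxOf l b) (hs : AmongTwoSmallest l a) : a ≠ b := by
  rintro rfl
  have hcard : 1 < (Finset.univ.erase a).card := by
    rw [Finset.card_erase_of_mem (Finset.mem_univ _), Finset.card_univ]; omega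
  obtain ⟨x, hx, y, hy, hxy⟩ := Finset.one_lt_card.mp hcard
  exact hxy (hs x y (htop x (Finset.mem_erase.mp hx).1 ) (htop y (Finset.mem_erase.mp hy).1))

lemma three_le_ncard [Fintype V] {s : Set V} {x y z : V} (hx : x ∈ s) (hy : y ∈ s)
    (hz : z ∈ s) (hxy : x ≠ y) (hxz : x ≠ z) (hyz : y ≠ z) : 3 ≤ Nat.card s := by
  rw [Nat.card_coe_set_eq]
  have h1 : ({x, y, z} : Set V) ⊆ s := by
    intro a ha
    simp only [Set.mem_insert_iff, Set.mem_singleton_iff] at ha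
    rcases ha with rfl | rfl | rfl <;> assumption
  have h2 : ({x, y, z} : Set V).ncard = 3 := by
    rw [Set.ncard_insert_of_notMem (by simp [hxy, hxz]) (Set.toFinite _), Set.ncard_pair hyz]
  rw [← h2]
  exact Set.ncard_le_ncard h1 (Set.toFinite s)

lemma dir1 [Fintype V] (hV : 4 ≤ Fintype.card V) {l₁ l₂ l₃ : LinearOrder V}
    {a₁ a₂ a₃ : V} (hR : IsStdRep l₁ l₂ l₃ a₁ a₂ a₃) {v : V}
    (hv1 : v ≠ a₁) (hv2 : v ≠ a₂) (hv3 : v ≠ a₃) :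
    ∃ w, (Sigma2 l₁ l₂ l₃).Adj v w ∧ l₁.lt v w ∧ l₂.lt w v ∧ l₃.lt w v := by
  classical
  have hV3 : 3 ≤ Fintype.card V := by omega
  have h12 : a₁ ≠ a₂ := maxima_ne hV3 hR.top₂ hR.a₁_small₂
  have h13 : a₁ ≠ a₃ := maxima_ne hV3 hR.top₃ hR.a₁_small₃
  set S : Finset V := Finset.univ.filter (fun z => l₁.lt v z ∧ l₂.lt z v ∧ l₃.lt z v) with hS
  have ha₁S : a₁ ∈ S := by
    have h2 : l₂.lt a₁ v := by
      rcases lo_total l₂ hv1 with h | h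
      · exact absurd (eq_of_lt_small l₂ hR.a₁_small₂ hR.a₃_small₂ h13 h) hv3
      · exact h
    have h3 : l₃.lt a₁ v := by
      rcases lo_total l₃ hv1 with h | h
      · exact absurd (eq_of_lt_small l₃ hR.a₁_small₃ hR.a₂_small₃ h12 h) hv2
      · exact h
    simp only [hS, Finset.mem_filter, Finset.mem_univ, true_and]
    exact ⟨hR.top₁ v hv1, h2, h3⟩
  letI := l₁
  obtain ⟨w, hwS, hwmin⟩ := S.exists_min_image id ⟨a₁, ha₁S⟩
  simp only [hS, Finset.mem_filter, Finset.mem_univ, true_and] at hwS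
  obtain ⟨hw1, hw2, hw3⟩ := hwS
  refine ⟨w, ⟨lo_ne l₁ hw1, fun z hzv hzw => ?_⟩, hw1, hw2, hw3⟩
  rcases lo_total l₁ hzv with hvz | hvz
  · -- z <₁ v : use representation on (v, z)
    rcases hR.rep v z hzv.symm with h | h | h
    · exact absurd h (fun h => lo_asymm l₁ h hvz)
    · exact Or.inr (Or.inl ⟨h, lo_trans l₂ hw2 h⟩)
    · exact Or.inr (Or.inr ⟨h, lo_trans l₃ hw3 h⟩)
  · -- v <₁ z
    rcases lo_total l₁ hzw with hzw' | hzw'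
    · -- z <₁ w : z not in S by minimality
      have hzS : z ∉ S := fun hz => absurd (hwmin z hz) (by simpa using hzw')
      simp only [hS, Finset.mem_filter, Finset.mem_univ, true_and] at hzS
      push_neg at hzS
      rcases lo_total l₂ hzv with h2' | h2'
      · have h3' : l₃.lt v z := by
          rcases lo_total l₃ hzv with h3 | h3
          · exact absurd h3 (hzS hvz h2')
          · exact h3
        exact Or.inr (Or.inr ⟨h3', lo_trans l₃ hw3 h3'⟩)
      · exact Or.inr (Or.inl ⟨h2', lo_trans l₂ hw2 h2'⟩)
    · exact Or.inl ⟨hvz, hzw'⟩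

lemma maxcase [Fintype V] (hV : 4 ≤ Fintype.card V) {l₁ l₂ l₃ : LinearOrder V}
    {a₁ a₂ a₃ : V} (hR : IsStdRep l₁ l₂ l₃ a₁ a₂ a₃) :
    3 ≤ Nat.card ((Sigma2 l₁ l₂ l₃).neighborSet a₁) := by
  classical
  have hV3 : 3 ≤ Fintype.card V := by omega
  have h12 : a₁ ≠ a₂ := maxima_ne hV3 hR.top₂ hR.a₁_small₂
  have h13 : a₁ ≠ a₃ := maxima_ne hV3 hR.top₃ hR.a₁_small₃
  have h23 : a₂ ≠ a₃ := maxima_ne hV3 hR.top₃ hR.a₂_small₃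
  letI := l₁
  have hne : (Finset.univ.erase a₁).Nonempty := by
    rw [← Finset.card_pos, Finset.card_erase_of_mem (Finset.mem_univ _), Finset.card_univ]
    omega
  obtain ⟨w, hw, hwmax⟩ := (Finset.univ.erase a₁).exists_max_image id hne
  have hwa₁ : w ≠ a₁ := (Finset.mem_erase.mp hw).1
  have hlt : ∀ z, z ≠ a₁ → z ≠ w → l₁.lt z w := by
    intro z hz1 hzw
    exact lt_of_le_of_ne (hwmax z (Finset.mem_erase.mpr ⟨hz1, Finset.mem_univ _⟩)) hzw
  have hwaux : ∀ b : V, b ≠ a₁ → AmongTwoSmallest l₁ b → w ≠ b := by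
    intro b hb hsmall
    rintro rfl
    have hcard : 1 < ((Finset.univ.erase a₁).erase w).card := by
      rw [Finset.card_erase_of_mem (Finset.mem_erase.mpr ⟨hb, Finset.mem_univ _⟩),
        Finset.card_erase_of_mem (Finset.mem_univ _), Finset.card_univ]
      omega
    obtain ⟨x, hx, y, hy, hxy⟩ := Finset.one_lt_card.mp hcard
    simp only [Finset.mem_erase, Finset.mem_univ, and_true] at hx hy
    exact hxy (hsmall x y (hlt x hx.2 hx.1) (hlt y hy.2 hy.1))
  have hwa₂ : w ≠ a₂ := hwaux a₂ h12.symm hR.a₂_small₁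
  have hwa₃ : w ≠ a₃ := hwaux a₃ h13.symm hR.a₃_small₁
  have hadj2 : (Sigma2 l₁ l₂ l₃).Adj a₁ a₂ := by
    refine ⟨h12, fun z hz1 hz2 => Or.inr (Or.inr ⟨?_, ?_⟩)⟩
    · rcases lo_total l₃ hz1 with h | h
      · exact absurd (eq_of_lt_small l₃ hR.a₁_small₃ hR.a₂_small₃ h12 h) hz2
      · exact h
    · rcases lo_total l₃ hz2 with h | h
      · exact absurd (eq_of_lt_small l₃ hR.a₂_small₃ hR.a₁_small₃ h12.symm h) hz1
      · exact h
  have hadj3 : (Sigma2 l₁ l₂ l₃).Adj a₁ a₃ := by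
    refine ⟨h13, fun z hz1 hz3 => Or.inr (Or.inl ⟨?_, ?_⟩)⟩
    · rcases lo_total l₂ hz1 with h | h
      · exact absurd (eq_of_lt_small l₂ hR.a₁_small₂ hR.a₃_small₂ h13 h) hz3
      · exact h
    · rcases lo_total l₂ hz3 with h | h
      · exact absurd (eq_of_lt_small l₂ hR.a₃_small₂ hR.a₁_small₂ h13.symm h) hz1
      · exact h
  have hadjw : (Sigma2 l₁ l₂ l₃).Adj a₁ w := by
    refine ⟨hwa₁.symm, fun z hz1 hzw => ?_⟩
    by_cases hz2 : z = a₂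
    · subst hz2
      exact Or.inr (Or.inl ⟨hR.top₂ a₁ h12, hR.top₂ w hwa₂⟩)
    by_cases hz3 : z = a₃
    · subst hz3
      exact Or.inr (Or.inr ⟨hR.top₃ a₁ h13, hR.top₃ w hwa₃⟩)
    rcases hR.rep w z (fun h => hzw h.symm) with h | h | h
    · exact absurd (hlt z hz1 hzw) (fun h' => lo_asymm l₁ h h')
    · refine Or.inr (Or.inl ⟨?_, h⟩)
      rcases lo_total l₂ hz1 with h' | h'
      · exact absurd (eq_of_lt_small l₂ hR.a₁_small₂ hR.a₃_small₂ h13 h') hz3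
      · exact h'
    · refine Or.inr (Or.inr ⟨?_, h⟩)
      rcases lo_total l₃ hz1 with h' | h'
      · exact absurd (eq_of_lt_small l₃ hR.a₁_small₃ hR.a₂_small₃ h12 h') hz2
      · exact h'
  exact three_le_ncard hadj2 hadj3 hadjw h23 hwa₂.symm hwa₃.symm

end Aux

/-- If |V| ≥ 4, every vertex of Σ₂(R) has degree at least 3. -/
theorem stmt15 {V : Type*} [Fintype V] (hV : 4 ≤ Fintype.card V)
    (l₁ l₂ l₃ : LinearOrder V) (a₁ a₂ a₃ : V)
    (hR : IsStdRep l₁ l₂ l₃ a₁ a₂ a₃) :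
    ∀ v : V, 3 ≤ Nat.card ((Sigma2 l₁ l₂ l₃).neighborSet v) := by
  intro v
  by_cases hv1 : v = a₁
  · subst hv1; exact maxcase hV hR
  by_cases hv2 : v = a₂
  · subst hv2
    rw [← Sigma2_cycle l₁ l₂ l₃]
    exact maxcase hV hR.cycle
  by_cases hv3 : v = a₃
  · subst hv3
    rw [← Sigma2_cycle l₁ l₂ l₃, ← Sigma2_cycle l₂ l₃ l₁]
    exact maxcase hV hR.cycle.cycle
  obtain ⟨w₁, hadj₁, hw₁v, _, _⟩ := dir1 hV hR hv1 hv2 hv3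
  obtain ⟨w₂, hadj₂, hw₂v, _, hw₂1⟩ := dir1 hV hR.cycle hv2 hv3 hv1
  obtain ⟨w₃, hadj₃, hw₃v, hw₃1, hw₃2⟩ := dir1 hV hR.cycle.cycle hv3 hv1 hv2
  rw [Sigma2_cycle l₁ l₂ l₃] at hadj₂
  rw [Sigma2_cycle l₂ l₃ l₁, Sigma2_cycle l₁ l₂ l₃] at hadj₃
  have d12 : w₁ ≠ w₂ := by rintro rfl; exact lo_asymm l₁ hw₁v hw₂1
  have d13 : w₁ ≠ w₃ := by rintro rfl; exact lo_asymm l₁ hw₁v hw₃1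
  have d23 : w₂ ≠ w₃ := by rintro rfl; exact lo_asymm l₂ hw₂v hw₃2
  exact three_le_ncard hadj₁ hadj₂ hadj₃ d12 d13 d23
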